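/- Assume (H1)–(H5). Let C > 0, 0 < η < η₀, ε > 0, and let v ∈ V satisfy I^ε(v) ≤ C. Call an open interval (x⁻,x⁺) ⊂ (0,1) an A₊^η-transition layer for v if z₁+η < v′(x) < z₂−η for all x ∈ (x⁻,x⁺), v′(x⁻) = z₁+η and v′(x⁺) = z₂−η (and analogously for A₋^η with the boundary values swapped, and B₊^η, B₋^η with z₁,z₂ replaced by z₂,z₃). Then there is a constant c > 0, depending only on C and on the data of W, such that every finite family of pairwise disjoint A₊^η-transition layers (respectively A₋^η-, B₊^η-, or B₋^η-transition layers) for v in (0,1) has cardinality at most c ε^{−1}. -/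

import Mathlib

open MeasureTheory Set Filter

/-- `u ∈ V = H²(0,1) ∩ W^{1,p}₀(0,1)`, represented through its first and second
derivatives `u'`, `u''`. -/
def MemV (p : ℝ) (u u' u'' : ℝ → ℝ) : Prop :=
  u 0 = 0 ∧ u 1 = 0 ∧
  (∀ x ∈ Set.Icc (0:ℝ) 1, u x = ∫ t in (0:ℝ)..x, u' t) ∧
  (∀ x ∈ Set.Icc (0:ℝ) 1, u' x = u' 0 + ∫ t in (0:ℝ)..x, u'' t) ∧
  IntervalIntegrable u' volume 0 1 ∧
  IntervalIntegrable u'' volume 0 1 ∧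
  IntervalIntegrable (fun x => |u' x| ^ p) volume 0 1 ∧
  IntervalIntegrable (fun x => (u'' x) ^ 2) volume 0 1

/-- The rescaled energy `I^ε(u) = ∫₀¹ (ε⁴ u''² + ε⁻² W(u') + ε⁻² u²) dx`. -/
noncomputable def Ieps (W : ℝ → ℝ) (ε : ℝ) (u u' u'' : ℝ → ℝ) : ℝ :=
  ∫ x in (0:ℝ)..1,
    (ε ^ 4 * (u'' x) ^ 2 + (ε ^ 2)⁻¹ * W (u' x) + (ε ^ 2)⁻¹ * (u x) ^ 2)

/-- Hypotheses (H1)–(H5) on the three–well potential `W`. -/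
structure HypW (W : ℝ → ℝ) (p q c₀ c₁ c₂ c₃ η₀ z₁ z₂ z₃ : ℝ) : Prop where
  cont : Continuous W
  nonneg : ∀ s, 0 ≤ W s
  hp : 1 < p
  hc₁ : 0 < c₁
  hc₂ : 0 < c₂
  hc₃ : 0 < c₃
  lb : ∀ s, c₁ * |s| ^ p - c₂ ≤ W s
  ub : ∀ s, W s ≤ c₃ * (|s| ^ p + 1)
  hz₁ : z₁ < 0
  hz₂ : 0 < z₂
  hz₂₃ : z₂ < z₃
  zeroSet : ∀ s, W s = 0 ↔ (s = z₁ ∨ s = z₂ ∨ s = z₃)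
  hη₀pos : 0 < η₀
  hη₀lt : η₀ < min 1 (min (-z₁) (min z₂ ((z₃ - z₂) / 2)))
  hc₀ : 0 < c₀
  hq : 0 < q
  coer : ∀ s,
    c₀ * min (min (|s - z₁| ^ q) (min (|s - z₂| ^ q) (|s - z₃| ^ q))) (η₀ ^ q) ≤ W s

/-- A rising transition layer for `v'` between the wells `w₁ < w₂`:
on `(I.1, I.2) ⊂ (0,1)` one has `w₁ + η < v' < w₂ − η`, with `v'(I.1) = w₁ + η` and
`v'(I.2) = w₂ − η`.  With `(w₁,w₂) = (z₁,z₂)` this is an `A₊^η`-layer, with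
`(w₁,w₂) = (z₂,z₃)` a `B₊^η`-layer. -/
def IsPlusLayer (v' : ℝ → ℝ) (η w₁ w₂ : ℝ) (I : ℝ × ℝ) : Prop :=
  0 ≤ I.1 ∧ I.1 < I.2 ∧ I.2 ≤ 1 ∧
  (∀ x ∈ Set.Ioo I.1 I.2, w₁ + η < v' x ∧ v' x < w₂ - η) ∧
  v' I.1 = w₁ + η ∧ v' I.2 = w₂ - η

/-- A decreasing transition layer (`A₋^η` resp. `B₋^η`): the boundary values are swapped. -/
def IsMinusLayer (v' : ℝ → ℝ) (η w₁ w₂ : ℝ) (I : ℝ × ℝ) : Prop :=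
  0 ≤ I.1 ∧ I.1 < I.2 ∧ I.2 ≤ 1 ∧
  (∀ x ∈ Set.Ioo I.1 I.2, w₁ + η < v' x ∧ v' x < w₂ - η) ∧
  v' I.1 = w₂ - η ∧ v' I.2 = w₁ + η

/-- A finite family of pairwise disjoint intervals. -/
def PairwiseDisjointFamily (s : Finset (ℝ × ℝ)) : Prop :=
  ∀ I ∈ s, ∀ J ∈ s, I ≠ J → Disjoint (Set.Ioo I.1 I.2) (Set.Ioo J.1 J.2)

lemma crossing {f : ℝ → ℝ} {x₀ x₁ α β : ℝ} (hx : x₀ < x₁)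
    (hf : ContinuousOn f (Icc x₀ x₁)) (hαβ : α < β)
    (h₀ : f x₀ < α) (h₁ : β < f x₁) :
    ∃ a b, x₀ ≤ a ∧ a < b ∧ b ≤ x₁ ∧ f a = α ∧ f b = β ∧
      ∀ x ∈ Icc a b, f x ∈ Icc α β := by
  set T : Set ℝ := Icc x₀ x₁ ∩ f ⁻¹' {β} with hT
  have hTne : T.Nonempty := by
    have := intermediate_value_Icc hx.le hf
    obtain ⟨y, hy, hfy⟩ := this ⟨by linarith, h₁.le⟩
    exact ⟨y, hy, hfy⟩
  have hTcl : IsClosed T := hf.preimage_isClosed_of_isClosed isClosed_Icc isClosed_singleton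
  have hTbd : BddBelow T := (bddBelow_Icc : BddBelow (Icc x₀ x₁)).mono inter_subset_left
  set b := sInf T with hbdef
  have hbT : b ∈ T := hTcl.csInf_mem hTne hTbd
  have hbI : b ∈ Icc x₀ x₁ := hbT.1
  have hfb : f b = β := hbT.2
  have hle : ∀ x ∈ Icc x₀ b, f x ≤ β := by
    intro x hxm
    by_contra hgt
    push_neg at hgt
    have hxI : x ∈ Icc x₀ x₁ := ⟨hxm.1, hxm.2.trans hbI.2⟩
    have := intermediate_value_Icc hxm.1 (hf.mono (Icc_subset_Icc le_rfl hxI.2))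
    obtain ⟨y, hy, hfy⟩ := this ⟨by linarith, hgt.le⟩
    have hyT : y ∈ T := ⟨⟨hy.1, hy.2.trans hxI.2⟩, hfy⟩
    have hby : b ≤ y := csInf_le hTbd hyT
    have : y = b := le_antisymm (hy.2.trans hxm.2) hby
    rw [this, hfb] at hfy
    have : x = b := le_antisymm hxm.2 (hby.trans hy.2)
    rw [this, hfb] at hgt
    exact lt_irrefl _ hgt
  have hx₀b : x₀ < b := lt_of_le_of_ne hbI.1 (fun h => by rw [h, hfb] at h₀; linarith)
  set S : Set ℝ := Icc x₀ b ∩ f ⁻¹' {α} with hS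
  have hSne : S.Nonempty := by
    have := intermediate_value_Icc hx₀b.le (hf.mono (Icc_subset_Icc le_rfl hbI.2))
    obtain ⟨y, hy, hfy⟩ := this ⟨h₀.le, by rw [hfb]; linarith⟩
    exact ⟨y, hy, hfy⟩
  have hScl : IsClosed S :=
    (hf.mono (Icc_subset_Icc le_rfl hbI.2)).preimage_isClosed_of_isClosed isClosed_Icc
      isClosed_singleton
  have hSbd : BddAbove S := (bddAbove_Icc (a := x₀) (b := b)).mono inter_subset_left
  set a := sSup S with hadef
  have haS : a ∈ S := hScl.csSup_mem hSne hSbd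
  have hfa : f a = α := haS.2
  have hab : a < b := lt_of_le_of_ne haS.1.2 (fun h => by rw [h, hfb] at hfa; linarith)
  refine ⟨a, b, haS.1.1, hab, hbI.2, hfa, hfb, ?_⟩
  intro x hxm
  have hxb : x ∈ Icc x₀ b := ⟨haS.1.1.trans hxm.1, hxm.2⟩
  refine ⟨?_, hle x hxb⟩
  by_contra hlt
  push_neg at hlt
  have := intermediate_value_Icc hxm.2
    ((hf.mono (Icc_subset_Icc le_rfl hbI.2)).mono (Icc_subset_Icc hxb.1 le_rfl))
  obtain ⟨y, hy, hfy⟩ := this ⟨hlt.le, by rw [hfb]; linarith⟩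
  have hyS : y ∈ S := ⟨⟨hxb.1.trans hy.1, hy.2⟩, hfy⟩
  have hya : y ≤ a := le_csSup hSbd hyS
  have : y = a := le_antisymm hya (hxm.1.trans hy.1)
  have hxa : x = a := le_antisymm (by linarith [hy.1, hya]) hxm.1
  rw [hxa, hfa] at hlt
  exact lt_irrefl _ hlt

lemma crossing_abs {f : ℝ → ℝ} {x₀ x₁ α β : ℝ} (hx : x₀ < x₁)
    (hf : ContinuousOn f (Icc x₀ x₁)) (hαβ : α < β)
    (h : (f x₀ < α ∧ β < f x₁) ∨ (β < f x₀ ∧ f x₁ < α)) :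
    ∃ a b, x₀ ≤ a ∧ a < b ∧ b ≤ x₁ ∧ |f b - f a| = β - α ∧
      ∀ x ∈ Icc a b, f x ∈ Icc α β := by
  rcases h with ⟨h₀, h₁⟩ | ⟨h₀, h₁⟩
  · obtain ⟨a, b, h1, h2, h3, h4, h5, h6⟩ := crossing hx hf hαβ h₀ h₁
    exact ⟨a, b, h1, h2, h3, by rw [h4, h5]; rw [abs_of_nonneg (by linarith)], h6⟩
  · obtain ⟨a, b, h1, h2, h3, h4, h5, h6⟩ :=
      crossing (f := fun x => -f x) hx hf.neg (neg_lt_neg hαβ) (by simpa) (by simpa)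
    refine ⟨a, b, h1, h2, h3, ?_, ?_⟩
    · have hfa : f a = β := by have := h4; simp at this; linarith
      have hfb : f b = α := by have := h5; simp at this; linarith
      rw [hfa, hfb, abs_of_nonpos (by linarith)]; ring
    · intro x hxm
      obtain ⟨hl, hr⟩ := h6 x hxm
      simp only [neg_le_neg_iff, le_neg, neg_le] at hl hr
      exact ⟨by linarith, by linarith⟩


lemma layer_count
    (W : ℝ → ℝ) (hWc : Continuous W) (hWnn : ∀ t, 0 ≤ W t)
    {α β m ε p : ℝ} (hαβ : α < β) (hm : 0 < m) (hε : 0 < ε)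
    (hWm : ∀ t ∈ Icc α β, m ≤ W t)
    {v v' v'' : ℝ → ℝ} (hV : MemV p v v' v'')
    (s : Finset (ℝ × ℝ)) (hdisj : PairwiseDisjointFamily s)
    (hlayer : ∀ I ∈ s, 0 ≤ I.1 ∧ I.1 < I.2 ∧ I.2 ≤ 1 ∧
      ((v' I.1 < α ∧ β < v' I.2) ∨ (β < v' I.1 ∧ v' I.2 < α))) :
    (s.card : ℝ) * (2 * ε * Real.sqrt m * (β - α)) ≤ Ieps W ε v v' v'' := by
  obtain ⟨-, -, hrep, hrep', hv', hv'', -, hv''sq⟩ := hV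
  set g : ℝ → ℝ := fun x =>
    ε ^ 4 * (v'' x) ^ 2 + (ε ^ 2)⁻¹ * W (v' x) + (ε ^ 2)⁻¹ * (v x) ^ 2 with hgdef
  have hgnn : ∀ x, 0 ≤ g x := by
    intro x
    have := hWnn (v' x)
    have h2 : (0:ℝ) < (ε ^ 2)⁻¹ := by positivity
    positivity
  have hcv' : ContinuousOn v' (Icc 0 1) := by
    have h1 : ContinuousOn (fun x => v' 0 + ∫ t in (0:ℝ)..x, v'' t) (Icc 0 1) := by
      have := intervalIntegral.continuousOn_primitive_interval'
        (μ := volume) (b₁ := (0:ℝ)) (b₂ := 1) (a := 0) hv'' (by simp)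
      rw [uIcc_of_le zero_le_one] at this
      exact continuousOn_const.add this
    exact h1.congr hrep'
  have hcv : ContinuousOn v (Icc 0 1) := by
    have h1 : ContinuousOn (fun x => ∫ t in (0:ℝ)..x, v' t) (Icc 0 1) := by
      have := intervalIntegral.continuousOn_primitive_interval'
        (μ := volume) (b₁ := (0:ℝ)) (b₂ := 1) (a := 0) hv' (by simp)
      rwa [uIcc_of_le zero_le_one] at this
    exact h1.congr hrep
  have hgint : IntervalIntegrable g volume 0 1 := by
    refine IntervalIntegrable.add (IntervalIntegrable.add ?_ ?_) ?_
    · exact hv''sq.const_mul _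
    · refine ContinuousOn.intervalIntegrable ?_
      rw [uIcc_of_le zero_le_one]
      exact continuousOn_const.mul (hWc.comp_continuousOn hcv')
    · refine ContinuousOn.intervalIntegrable ?_
      rw [uIcc_of_le zero_le_one]
      exact continuousOn_const.mul (hcv.pow 2)
  have hgIoc : IntegrableOn g (Ioc 0 1) volume := by
    have := hgint.def'
    rwa [uIoc_of_le zero_le_one] at this
  -- per-layer lower bound
  have key : ∀ I ∈ s, 2 * ε * Real.sqrt m * (β - α) ≤ ∫ x in Ioo I.1 I.2, g x := by
    intro I hI
    obtain ⟨hI0, hI12, hI1, hIv⟩ := hlayer I hI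
    have hIcc : Icc I.1 I.2 ⊆ Icc (0:ℝ) 1 := Icc_subset_Icc hI0 hI1
    obtain ⟨a, b, ha1, hab, hb2, habs, hmem⟩ :=
      crossing_abs hI12 (hcv'.mono hIcc) hαβ hIv
    have haI : Icc a b ⊆ Icc (0:ℝ) 1 :=
      (Icc_subset_Icc (hI0.trans ha1) (hb2.trans hI1))
    have hsub : Ioo a b ⊆ Ioo I.1 I.2 := Ioo_subset_Ioo ha1 hb2
    have hgOn : IntegrableOn g (Ioo I.1 I.2) volume :=
      hgIoc.mono_set (fun x hx => ⟨lt_of_le_of_lt hI0 hx.1, hx.2.le.trans hI1⟩)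
    -- v' b - v' a = ∫ a..b v''
    have hv''ab : IntervalIntegrable v'' volume a b :=
      hv''.mono_set (by rw [uIcc_of_le hab.le, uIcc_of_le zero_le_one]; exact haI)
    have hdiff : v' b - v' a = ∫ t in a..b, v'' t := by
      rw [hrep' a (haI ⟨le_rfl, hab.le⟩), hrep' b (haI ⟨hab.le, le_rfl⟩)]
      have h0a : IntervalIntegrable v'' volume 0 a := by
        refine hv''.mono_set ?_
        rw [uIcc_of_le (hI0.trans ha1), uIcc_of_le zero_le_one]
        exact Icc_subset_Icc le_rfl ((hab.le.trans hb2).trans hI1)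
      have h0b : IntervalIntegrable v'' volume 0 b := by
        refine hv''.mono_set ?_
        rw [uIcc_of_le ((hI0.trans ha1).trans hab.le), uIcc_of_le zero_le_one]
        exact Icc_subset_Icc le_rfl (hb2.trans hI1)
      have := intervalIntegral.integral_interval_sub_left h0b h0a
      linarith [this]
    -- pointwise bound on Ioo a b
    have hpt : ∀ x ∈ Ioo a b, 2 * ε * Real.sqrt m * |v'' x| ≤ g x := by
      intro x hx
      have hv'mem := hmem x ⟨hx.1.le, hx.2.le⟩
      have hWx : m ≤ W (v' x) := hWm _ hv'mem
      have hsq : Real.sqrt m ^ 2 = m := Real.sq_sqrt hm.le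
      have hsnn : 0 ≤ Real.sqrt m := Real.sqrt_nonneg m
      have habs' : |v'' x| ^ 2 = (v'' x) ^ 2 := sq_abs _
      have hvsq : 0 ≤ (ε ^ 2)⁻¹ * (v x) ^ 2 := by positivity
      have hW2 : (ε ^ 2)⁻¹ * m ≤ (ε ^ 2)⁻¹ * W (v' x) := by
        have : (0:ℝ) < (ε ^ 2)⁻¹ := by positivity
        nlinarith
      have hε2 : (ε:ℝ) ≠ 0 := ne_of_gt hε
      have amgm : 2 * ε * Real.sqrt m * |v'' x| ≤ ε ^ 4 * (v'' x) ^ 2 + (ε ^ 2)⁻¹ * m := by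
        calc 2 * ε * Real.sqrt m * |v'' x|
            = 2 * (ε ^ 2 * |v'' x|) * (Real.sqrt m / ε) := by field_simp
          _ ≤ (ε ^ 2 * |v'' x|) ^ 2 + (Real.sqrt m / ε) ^ 2 := two_mul_le_add_sq _ _
          _ = ε ^ 4 * (v'' x) ^ 2 + (ε ^ 2)⁻¹ * m := by
              rw [div_pow, hsq, div_eq_mul_inv, mul_pow, ← habs']; ring
      simp only [hgdef]
      linarith
    -- integrate
    have hgab : IntegrableOn g (Ioo a b) volume := hgOn.mono_set hsub
    have hv''abs : IntegrableOn (fun x => 2 * ε * Real.sqrt m * |v'' x|) (Ioo a b) volume := by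
      have : IntegrableOn v'' (Ioo a b) volume := by
        have := hv''ab.def'
        rw [uIoc_of_le hab.le] at this
        exact this.mono_set Ioo_subset_Ioc_self
      exact (this.abs.const_mul _)
    have step1 : ∫ x in Ioo a b, 2 * ε * Real.sqrt m * |v'' x| ≤ ∫ x in Ioo a b, g x := by
      refine setIntegral_mono_on hv''abs hgab measurableSet_Ioo hpt
    have step2 : 2 * ε * Real.sqrt m * (β - α) ≤ ∫ x in Ioo a b, 2 * ε * Real.sqrt m * |v'' x| := by
      rw [integral_const_mul]
      have h1 : β - α = |∫ x in Ioo a b, v'' x| := by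
        rw [← habs, hdiff, intervalIntegral.integral_of_le hab.le,
          integral_Ioc_eq_integral_Ioo]
      have h2 : |∫ x in Ioo a b, v'' x| ≤ ∫ x in Ioo a b, |v'' x| := by
        have := norm_integral_le_integral_norm (μ := volume.restrict (Ioo a b)) v''
        simpa [Real.norm_eq_abs] using this
      have h3 : 0 ≤ 2 * ε * Real.sqrt m := by positivity
      rw [h1]
      exact mul_le_mul_of_nonneg_left h2 h3
    have step3 : ∫ x in Ioo a b, g x ≤ ∫ x in Ioo I.1 I.2, g x := by
      refine setIntegral_mono_set hgOn ?_ (HasSubset.Subset.eventuallyLE hsub)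
      exact Eventually.of_forall (fun x => hgnn x)
    linarith
  -- summation
  have hsum : ∑ I ∈ s, ∫ x in Ioo I.1 I.2, g x ≤ Ieps W ε v v' v'' := by
    have hmeas : ∀ I ∈ s, MeasurableSet (Ioo I.1 I.2) := fun _ _ => measurableSet_Ioo
    have hpd : Set.Pairwise ↑s (Function.onFun Disjoint fun I : ℝ × ℝ => Ioo I.1 I.2) := by
      intro I hI J hJ hne
      exact hdisj I hI J hJ hne
    have hint : ∀ I ∈ s, IntegrableOn g (Ioo I.1 I.2) volume := by
      intro I hI
      obtain ⟨hI0, hI12, hI1, -⟩ := hlayer I hI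
      exact hgIoc.mono_set (fun x hx => ⟨lt_of_le_of_lt hI0 hx.1, hx.2.le.trans hI1⟩)
    rw [← integral_biUnion_finset s hmeas hpd hint]
    have hU : (⋃ I ∈ s, Ioo I.1 I.2) ⊆ Ioc 0 1 := by
      intro x hx
      simp only [mem_iUnion] at hx
      obtain ⟨I, hI, hxI⟩ := hx
      obtain ⟨hI0, hI12, hI1, -⟩ := hlayer I hI
      exact ⟨lt_of_le_of_lt hI0 hxI.1, hxI.2.le.trans hI1⟩
    have := setIntegral_mono_set hgIoc
      (Eventually.of_forall (fun x => hgnn x)) (HasSubset.Subset.eventuallyLE hU)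
    calc ∫ x in ⋃ I ∈ s, Ioo I.1 I.2, g x ≤ ∫ x in Ioc 0 1, g x := this
    _ = Ieps W ε v v' v'' := by
        rw [Ieps, intervalIntegral.integral_of_le zero_le_one]
  have hcard : (s.card : ℝ) * (2 * ε * Real.sqrt m * (β - α))
      = ∑ _I ∈ s, 2 * ε * Real.sqrt m * (β - α) := by
    rw [Finset.sum_const, nsmul_eq_mul]
  rw [hcard]
  exact (Finset.sum_le_sum key).trans hsum

theorem statement2
    (W : ℝ → ℝ) (p q c₀ c₁ c₂ c₃ η₀ z₁ z₂ z₃ : ℝ)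
    (hW : HypW W p q c₀ c₁ c₂ c₃ η₀ z₁ z₂ z₃)
    (C : ℝ) (hC : 0 < C) :
    ∃ c : ℝ, 0 < c ∧
      ∀ η ε : ℝ, ∀ v v' v'' : ℝ → ℝ,
        0 < η → η < η₀ → 0 < ε →
        MemV p v v' v'' → Ieps W ε v v' v'' ≤ C →
        (∀ s : Finset (ℝ × ℝ), PairwiseDisjointFamily s →
            (∀ I ∈ s, IsPlusLayer v' η z₁ z₂ I) → (s.card : ℝ) ≤ c * ε⁻¹) ∧
        (∀ s : Finset (ℝ × ℝ), PairwiseDisjointFamily s →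
            (∀ I ∈ s, IsMinusLayer v' η z₁ z₂ I) → (s.card : ℝ) ≤ c * ε⁻¹) ∧
        (∀ s : Finset (ℝ × ℝ), PairwiseDisjointFamily s →
            (∀ I ∈ s, IsPlusLayer v' η z₂ z₃ I) → (s.card : ℝ) ≤ c * ε⁻¹) ∧
        (∀ s : Finset (ℝ × ℝ), PairwiseDisjointFamily s →
            (∀ I ∈ s, IsMinusLayer v' η z₂ z₃ I) → (s.card : ℝ) ≤ c * ε⁻¹) := by
  classical
  have hη₀ := hW.hη₀lt
  rw [lt_min_iff, lt_min_iff, lt_min_iff] at hη₀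
  obtain ⟨hη₀1, hη₀z₁, hη₀z₂, hη₀z₃⟩ := hη₀
  have hη₀pos := hW.hη₀pos
  set m : ℝ := c₀ * η₀ ^ q with hmdef
  have hm : 0 < m := mul_pos hW.hc₀ (Real.rpow_pos_of_pos hη₀pos q)
  have hWlow : ∀ t : ℝ, η₀ ≤ |t - z₁| → η₀ ≤ |t - z₂| → η₀ ≤ |t - z₃| → m ≤ W t := by
    intro t h1 h2 h3
    have hkey : η₀ ^ q ≤
        min (min (|t - z₁| ^ q) (min (|t - z₂| ^ q) (|t - z₃| ^ q))) (η₀ ^ q) := by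
      refine le_min (le_min ?_ (le_min ?_ ?_)) le_rfl <;>
        exact Real.rpow_le_rpow hη₀pos.le (by assumption) hW.hq.le
    calc m ≤ c₀ * min (min (|t - z₁| ^ q) (min (|t - z₂| ^ q) (|t - z₃| ^ q))) (η₀ ^ q) :=
          mul_le_mul_of_nonneg_left hkey hW.hc₀.le
      _ ≤ W t := hW.coer t
  have hz₁ := hW.hz₁; have hz₂ := hW.hz₂; have hz₂₃ := hW.hz₂₃
  have hWmA : ∀ t ∈ Icc (z₁ + η₀) (z₂ - η₀), m ≤ W t := by
    rintro t ⟨ht1, ht2⟩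
    refine hWlow t ?_ ?_ ?_
    · exact le_trans (by linarith) (le_abs_self _)
    · exact le_trans (by linarith) (neg_le_abs _)
    · exact le_trans (by linarith) (neg_le_abs _)
  have hWmB : ∀ t ∈ Icc (z₂ + η₀) (z₃ - η₀), m ≤ W t := by
    rintro t ⟨ht1, ht2⟩
    refine hWlow t ?_ ?_ ?_
    · exact le_trans (by linarith) (le_abs_self _)
    · exact le_trans (by linarith) (le_abs_self _)
    · exact le_trans (by linarith) (neg_le_abs _)
  set K : ℝ := Real.sqrt m with hKdef
  have hK : 0 < K := Real.sqrt_pos.2 hm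
  set L : ℝ := min (z₂ - z₁ - 2 * η₀) (z₃ - z₂ - 2 * η₀) with hLdef
  have hL : 0 < L := lt_min (by linarith) (by linarith [hη₀z₃])
  refine ⟨C / (2 * K * L), by positivity, ?_⟩
  intro η ε v v' v'' hη hηη₀ hε hV hIeps
  have main : ∀ α β : ℝ, α < β → L ≤ β - α → (∀ t ∈ Icc α β, m ≤ W t) →
      ∀ s : Finset (ℝ × ℝ), PairwiseDisjointFamily s →
        (∀ I ∈ s, 0 ≤ I.1 ∧ I.1 < I.2 ∧ I.2 ≤ 1 ∧
          ((v' I.1 < α ∧ β < v' I.2) ∨ (β < v' I.1 ∧ v' I.2 < α))) →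
        (s.card : ℝ) ≤ C / (2 * K * L) * ε⁻¹ := by
    intro α β hαβ hLle hWm s hd hl
    have h1 : (s.card : ℝ) * (2 * ε * K * (β - α)) ≤ C :=
      le_trans (layer_count W hW.cont hW.nonneg hαβ hm hε hWm hV s hd hl) hIeps
    have h2 : (s.card : ℝ) * (2 * ε * K * L) ≤ C := by
      refine le_trans ?_ h1
      have : 2 * ε * K * L ≤ 2 * ε * K * (β - α) :=
        mul_le_mul_of_nonneg_left hLle (by positivity)
      exact mul_le_mul_of_nonneg_left this (Nat.cast_nonneg _)
    have hpos : (0:ℝ) < 2 * ε * K * L := by positivity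
    have := (le_div_iff₀ hpos).2 h2
    refine le_trans this (le_of_eq ?_)
    rw [← div_eq_mul_inv, div_div]
    ring_nf
  refine ⟨?_, ?_, ?_, ?_⟩
  · intro s hd hl
    refine main (z₁ + η₀) (z₂ - η₀) (by linarith) (le_of_le_of_eq (min_le_left _ _) (by ring)) hWmA s hd ?_
    intro I hI
    obtain ⟨h1, h2, h3, -, h5, h6⟩ := hl I hI
    exact ⟨h1, h2, h3, Or.inl ⟨by rw [h5]; linarith, by rw [h6]; linarith⟩⟩
  · intro s hd hl
    refine main (z₁ + η₀) (z₂ - η₀) (by linarith) (le_of_le_of_eq (min_le_left _ _) (by ring)) hWmA s hd ?_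
    intro I hI
    obtain ⟨h1, h2, h3, -, h5, h6⟩ := hl I hI
    exact ⟨h1, h2, h3, Or.inr ⟨by rw [h5]; linarith, by rw [h6]; linarith⟩⟩
  · intro s hd hl
    refine main (z₂ + η₀) (z₃ - η₀) (by linarith [hη₀z₃]) (le_of_le_of_eq (min_le_right _ _) (by ring)) hWmB s hd ?_
    intro I hI
    obtain ⟨h1, h2, h3, -, h5, h6⟩ := hl I hI
    exact ⟨h1, h2, h3, Or.inl ⟨by rw [h5]; linarith, by rw [h6]; linarith⟩⟩
  · intro s hd hl
    refine main (z₂ + η₀) (z₃ - η₀) (by linarith [hη₀z₃]) (le_of_le_of_eq (min_le_right _ _) (by ring)) hWmB s hd ?_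
    intro I hI
    obtain ⟨h1, h2, h3, -, h5, h6⟩ := hl I hI
    exact ⟨h1, h2, h3, Or.inr ⟨by rw [h5]; linarith, by rw [h6]; linarith⟩⟩
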